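/- For integers k ≥ 1, l ≥ 2 and -1 ≤ r ≤ k-l+1: l·A_{k+1,l}^r − (k-l+2)·(A_{k,l-2}^{r+1} + A_{k,l-1}^r − A_{k,l-1}^{r+1}) = −(2k-l)·A_{k-1,l-2}^{r+1}. -/

import Mathlib

/-- Binomial coefficient `C(n,r)` for integer arguments: zero if `r < 0` or
`0 ≤ n < r`, the usual binomial for `0 ≤ r ≤ n`, and the generalized binomial
for negative upper index. -/
def C (n r : ℤ) : ℤ :=
  if r < 0 then 0
  else if 0 ≤ n then (n.toNat.choose r.toNat : ℤ)
  else (-1) ^ r.toNat * ((r - n - 1).toNat.choose r.toNat : ℤ)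

lemma C_neg {n r : ℤ} (h : r < 0) : C n r = 0 := by simp [C, h]

lemma C_nn {n r : ℤ} (hr : 0 ≤ r) (hn : 0 ≤ n) : C n r = (n.toNat.choose r.toNat : ℤ) := by
  simp [C, not_lt.mpr hr, hn]

lemma C_nneg {n r : ℤ} (hr : 0 ≤ r) (hn : n < 0) :
    C n r = (-1) ^ r.toNat * ((r - n - 1).toNat.choose r.toNat : ℤ) := by
  simp [C, not_lt.mpr hr, not_le.mpr hn]

lemma pascal (n r : ℤ) : C n r = C (n - 1) (r - 1) + C (n - 1) r := by
  rcases lt_trichotomy r 0 with h | h | h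
  · rw [C_neg h, C_neg (by omega), C_neg h]; ring
  · subst h
    have h1 : C n 0 = 1 := by
      rcases le_or_gt 0 n with hn | hn
      · rw [C_nn le_rfl hn]; simp
      · rw [C_nneg le_rfl hn]; simp
    have h2 : C (n - 1) 0 = 1 := by
      rcases le_or_gt 0 (n - 1) with hn | hn
      · rw [C_nn le_rfl hn]; simp
      · rw [C_nneg le_rfl hn]; simp
    rw [h1, h2, C_neg (by omega)]; ring
  · rcases lt_trichotomy n 0 with hn | hn | hn
    · rw [C_nneg (by omega) hn, C_nneg (by omega) (by omega), C_nneg (by omega) (by omega)]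
      have e1 : (r - 1 - (n - 1) - 1).toNat = (r - n - 1).toNat := by omega
      have e2 : (r - (n - 1) - 1).toNat = (r - n - 1).toNat + 1 := by omega
      have e3 : r.toNat = (r - 1).toNat + 1 := by omega
      rw [e1, e2, e3, Nat.choose_succ_succ (r - n - 1).toNat (r-1).toNat]
      push_cast [pow_succ]
      ring
    · subst hn
      rw [C_nn (by omega) le_rfl, C_nneg (by omega) (by omega), C_nneg (by omega) (by omega)]
      have z : (0:ℤ).toNat.choose r.toNat = 0 := Nat.choose_eq_zero_of_lt (by omega)
      have e1 : (r - 1 - (0 - 1) - 1).toNat = (r - 1).toNat := by omega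
      have e2 : (r - (0 - 1) - 1).toNat = r.toNat := by omega
      have e3 : r.toNat = (r - 1).toNat + 1 := by omega
      rw [z, e1, e2, Nat.choose_self, e3, Nat.choose_self, pow_succ]
      push_cast; ring
    · rw [C_nn (by omega) (by omega), C_nn (by omega) (by omega), C_nn (by omega) (by omega)]
      have e1 : n.toNat = (n - 1).toNat + 1 := by omega
      have e2 : r.toNat = (r - 1).toNat + 1 := by omega
      rw [e1, e2, Nat.choose_succ_succ]
      push_cast; ring

lemma row (n r : ℤ) : r * C n r = (n - r + 1) * C n (r - 1) := by
  rcases lt_trichotomy r 0 with h | h | h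
  · rw [C_neg h, C_neg (by omega)]; ring
  · subst h
    have hz : C n (0 - 1) = 0 := C_neg (by norm_num)
    rw [hz]; ring
  · rcases le_or_gt 0 n with hn | hn
    · rw [C_nn (by omega) hn, C_nn (by omega) hn]
      rcases le_or_gt r (n + 1) with hrn | hrn
      · have key := Nat.choose_succ_right_eq n.toNat (r - 1).toNat
        have hr2 : (r - 1).toNat + 1 = r.toNat := by omega
        rw [hr2] at key
        have e : (n.toNat - (r - 1).toNat : ℕ) = (n - r + 1).toNat := by omega
        rw [e] at key
        have cast1 := congrArg (fun x : ℕ => (x : ℤ)) key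
        push_cast at cast1
        have c2 : ((r.toNat : ℤ)) = r := by omega
        have c3 : (((n - r + 1).toNat : ℤ)) = n - r + 1 := by omega
        rw [c2, c3] at cast1
        linarith
      · have z1 : n.toNat.choose r.toNat = 0 := Nat.choose_eq_zero_of_lt (by omega)
        have z2 : n.toNat.choose (r - 1).toNat = 0 := Nat.choose_eq_zero_of_lt (by omega)
        rw [z1, z2]; ring
    · rw [C_nneg (by omega) hn, C_nneg (by omega) hn]
      have e1 : (r - 1 - n - 1).toNat = (r - n - 2).toNat := by omega
      rw [e1]
      have key := Nat.add_one_mul_choose_eq (r - n - 2).toNat (r - 1).toNat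
      -- succ M * choose M k = choose (M+1) (k+1) * (k+1)
      have h3 : (r - n - 2).toNat + 1 = (r - n - 1).toNat := by omega
      have h4 : (r - 1).toNat + 1 = r.toNat := by omega
      simp -failIfUnchanged only [Nat.succ_eq_add_one] at key
      rw [h3, h4] at key
      have cast1 := congrArg (fun x : ℕ => (x : ℤ)) key
      push_cast at cast1
      have c2 : (((r - n - 1).toNat : ℤ)) = r - n - 1 := by omega
      have c3 : ((r.toNat : ℤ)) = r := by omega
      rw [c2, c3] at cast1
      have hsign : ((-1:ℤ)) ^ r.toNat = -(-1) ^ (r - 1).toNat := by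
        rw [show r.toNat = (r-1).toNat + 1 by omega, pow_succ]; ring
      rw [hsign]
      linear_combination ((-1:ℤ) ^ (r - 1).toNat) * cast1

lemma pascal' (n r n' r' : ℤ) (h1 : n' = n - 1) (h2 : r' = r - 1) :
    C n r = C n' r' + C n' r := by subst h1; subst h2; exact pascal n r

lemma row' (n r c r' : ℤ) (hc : c = n - r + 1) (hr' : r' = r - 1) :
    r * C n r = c * C n r' := by subst hc; subst hr'; exact row n r

def A (k l r : ℤ) : ℤ :=
  C (l + r - 1) (r - 1) * C (2 * k - l - 1) (k - l - r - 1) + C (l + r) r * C (2 * k - l - 1) (k - l - r)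

theorem stmt_12 (k l r : ℤ) (hk : 1 ≤ k) (hl : 2 ≤ l) (hr : -1 ≤ r) (hr' : r ≤ k - l + 1) :
    l * A (k + 1) l r - (k - l + 2) * (A k (l - 2) (r + 1) + A k (l - 1) r - A k (l - 1) (r + 1))
      = -((2 * k - l) * A (k - 1) (l - 2) (r + 1)) := by
  simp only [A]
  rw [show (l - 2 + (r + 1) - 1 : ℤ) = l + r - 2 by ring]
  rw [show (l - 2 + (r + 1) : ℤ) = l + r - 1 by ring]
  rw [show (l - 1 + r - 1 : ℤ) = l + r - 2 by ring]
  rw [show (l - 1 + (r + 1) - 1 : ℤ) = l + r - 1 by ring]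
  rw [show (l - 1 + (r + 1) : ℤ) = l + r by ring]
  rw [show (l - 1 + r : ℤ) = l + r - 1 by ring]
  rw [show (r + 1 - 1 : ℤ) = r by ring]
  rw [show (2 * (k + 1) - l - 1 : ℤ) = 2 * k - l + 1 by ring]
  rw [show (2 * k - (l - 2) - 1 : ℤ) = 2 * k - l + 1 by ring]
  rw [show (2 * k - (l - 1) - 1 : ℤ) = 2 * k - l by ring]
  rw [show (2 * (k - 1) - (l - 2) - 1 : ℤ) = 2 * k - l - 1 by ring]
  rw [show (k + 1 - l - r - 1 : ℤ) = k - l - r by ring]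
  rw [show (k + 1 - l - r : ℤ) = k - l - r + 1 by ring]
  rw [show (k - (l - 2) - (r + 1) - 1 : ℤ) = k - l - r by ring]
  rw [show (k - (l - 2) - (r + 1) : ℤ) = k - l - r + 1 by ring]
  rw [show (k - (l - 1) - (r + 1) - 1 : ℤ) = k - l - r - 1 by ring]
  rw [show (k - (l - 1) - (r + 1) : ℤ) = k - l - r by ring]
  rw [show (k - (l - 1) - r - 1 : ℤ) = k - l - r by ring]
  rw [show (k - (l - 1) - r : ℤ) = k - l - r + 1 by ring]
  rw [show (k - 1 - (l - 2) - (r + 1) - 1 : ℤ) = k - l - r - 1 by ring]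
  rw [show (k - 1 - (l - 2) - (r + 1) : ℤ) = k - l - r by ring]
  have hPA0_0 : C (l + r) (r) = C (l + r - 1) (r - 1) + C (l + r - 1) (r) := pascal' _ _ _ _ (by ring) (by ring)
  have hPA0_1 : C (l + r) (r + 1) = C (l + r - 1) (r) + C (l + r - 1) (r + 1) := pascal' _ _ _ _ (by ring) (by ring)
  have hPA1_m1 : C (l + r - 1) (r - 1) = C (l + r - 2) (r - 2) + C (l + r - 2) (r - 1) := pascal' _ _ _ _ (by ring) (by ring)
  have hPA1_0 : C (l + r - 1) (r) = C (l + r - 2) (r - 1) + C (l + r - 2) (r) := pascal' _ _ _ _ (by ring) (by ring)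
  have hPA1_1 : C (l + r - 1) (r + 1) = C (l + r - 2) (r) + C (l + r - 2) (r + 1) := pascal' _ _ _ _ (by ring) (by ring)
  have hPB0_0 : C (2 * k - l + 1) (k - l - r) = C (2 * k - l) (k - l - r - 1) + C (2 * k - l) (k - l - r) := pascal' _ _ _ _ (by ring) (by ring)
  have hPB0_1 : C (2 * k - l + 1) (k - l - r + 1) = C (2 * k - l) (k - l - r) + C (2 * k - l) (k - l - r + 1) := pascal' _ _ _ _ (by ring) (by ring)
  have hPB1_m1 : C (2 * k - l) (k - l - r - 1) = C (2 * k - l - 1) (k - l - r - 2) + C (2 * k - l - 1) (k - l - r - 1) := pascal' _ _ _ _ (by ring) (by ring)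
  have hPB1_0 : C (2 * k - l) (k - l - r) = C (2 * k - l - 1) (k - l - r - 1) + C (2 * k - l - 1) (k - l - r) := pascal' _ _ _ _ (by ring) (by ring)
  have hPB1_1 : C (2 * k - l) (k - l - r + 1) = C (2 * k - l - 1) (k - l - r) + C (2 * k - l - 1) (k - l - r + 1) := pascal' _ _ _ _ (by ring) (by ring)
  have hRAm1 : (r - 1) * C (l + r - 2) (r - 1) = (l) * C (l + r - 2) (r - 2) := row' _ _ _ _ (by ring) (by ring)
  have hRA0 : (r) * C (l + r - 2) (r) = (l - 1) * C (l + r - 2) (r - 1) := row' _ _ _ _ (by ring) (by ring)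
  have hRA1 : (r + 1) * C (l + r - 2) (r + 1) = (l - 2) * C (l + r - 2) (r) := row' _ _ _ _ (by ring) (by ring)
  have hRBm1 : (k - l - r - 1) * C (2 * k - l - 1) (k - l - r - 1) = (k + r + 1) * C (2 * k - l - 1) (k - l - r - 2) := row' _ _ _ _ (by ring) (by ring)
  have hRB0 : (k - l - r) * C (2 * k - l - 1) (k - l - r) = (k + r) * C (2 * k - l - 1) (k - l - r - 1) := row' _ _ _ _ (by ring) (by ring)
  have hRB1 : (k - l - r + 1) * C (2 * k - l - 1) (k - l - r + 1) = (k + r - 1) * C (2 * k - l - 1) (k - l - r) := row' _ _ _ _ (by ring) (by ring)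
  linear_combination
    ((2 : ℤ) + (-2 : ℤ) * r + (-2 : ℤ) * l + (1 : ℤ) * k) * (C (2 * k - l + 1) (k - l - r)) * hPA0_0 +
    ((-2 : ℤ) + (2 : ℤ) * l + (-1 : ℤ) * k) * (C (2 * k - l + 1) (k - l - r + 1)) * hPA0_0 +
    ((-2 : ℤ) + (2 : ℤ) * r + (2 : ℤ) * l + (-1 : ℤ) * k) * (C (2 * k - l) (k - l - r - 1)) * hPA0_0 +
    ((2 : ℤ) + (-1 : ℤ) * l + (1 : ℤ) * k) * (C (2 * k - l) (k - l - r + 1)) * hPA0_0 +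
    ((1 : ℤ) * l + (-2 : ℤ) * k) * (C (2 * k - l - 1) (k - l - r - 1)) * hPA0_0 +
    ((-1 : ℤ) * l + (2 : ℤ) * k) * (C (2 * k - l - 1) (k - l - r)) * hPA0_0 +
    ((1 : ℤ) + (1 : ℤ) * r) * (C (2 * k - l + 1) (k - l - r)) * hPA0_1 +
    ((1 : ℤ) + (-1 : ℤ) * r + (-1 : ℤ) * l + (1 : ℤ) * k) * (C (2 * k - l + 1) (k - l - r + 1)) * hPA0_1 +
    ((-1 : ℤ) + (-1 : ℤ) * r) * (C (2 * k - l) (k - l - r - 1)) * hPA0_1 +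
    ((1 : ℤ) * l + (-2 : ℤ) * k) * (C (2 * k - l - 1) (k - l - r)) * hPA0_1 +
    ((-2 : ℤ) + (2 : ℤ) * l + (-1 : ℤ) * k) * (C (2 * k - l + 1) (k - l - r)) * hPA1_m1 +
    ((1 : ℤ) * l) * (C (2 * k - l + 1) (k - l - r + 1)) * hPA1_m1 +
    ((1 : ℤ) + (-1 : ℤ) * r + (-1 : ℤ) * l) * (C (2 * k - l) (k - l - r - 1)) * hPA1_m1 +
    ((2 : ℤ) + (-1 : ℤ) * l + (1 : ℤ) * k) * (C (2 * k - l) (k - l - r)) * hPA1_m1 +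
    ((-1 : ℤ) * l + (2 : ℤ) * k) * (C (2 * k - l - 1) (k - l - r - 1)) * hPA1_m1 +
    ((3 : ℤ) + (-1 : ℤ) * r + (-2 : ℤ) * l + (1 : ℤ) * k) * (C (2 * k - l + 1) (k - l - r)) * hPA1_0 +
    ((-1 : ℤ) + (-1 : ℤ) * r + (1 : ℤ) * l) * (C (2 * k - l + 1) (k - l - r + 1)) * hPA1_0 +
    ((-1 : ℤ) + (1 : ℤ) * r + (1 : ℤ) * l) * (C (2 * k - l) (k - l - r - 1)) * hPA1_0 +
    ((1 : ℤ) * l + (-2 : ℤ) * k) * (C (2 * k - l - 1) (k - l - r - 1)) * hPA1_0 +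
    ((1 : ℤ) + (1 : ℤ) * r) * (C (2 * k - l + 1) (k - l - r)) * hPA1_1 +
    ((-1 : ℤ) + (-1 : ℤ) * r) * (C (2 * k - l + 1) (k - l - r + 1)) * hPA1_1 +
    ((-1 : ℤ) + (-1 : ℤ) * r) * (C (2 * k - l) (k - l - r - 1)) * hPA1_1 +
    ((-2 : ℤ) + (2 : ℤ) * r + (2 : ℤ) * l + (-1 : ℤ) * k) * (C (l + r) (r)) * hPB0_0 +
    ((-1 : ℤ) + (-1 : ℤ) * r) * (C (l + r) (r + 1)) * hPB0_0 +
    ((4 : ℤ) + (-2 : ℤ) * r + (-3 : ℤ) * l + (2 : ℤ) * k) * (C (l + r - 1) (r - 1)) * hPB0_0 +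
    ((-2 : ℤ) + (1 : ℤ) * l + (-1 : ℤ) * k) * (C (l + r - 2) (r - 2)) * hPB0_0 +
    ((2 : ℤ) + (-1 : ℤ) * l + (1 : ℤ) * k) * (C (l + r) (r)) * hPB0_1 +
    ((-1 : ℤ) + (1 : ℤ) * r + (1 : ℤ) * l + (-1 : ℤ) * k) * (C (l + r) (r + 1)) * hPB0_1 +
    ((-2 : ℤ) + (1 : ℤ) * l + (-1 : ℤ) * k) * (C (l + r - 1) (r - 1)) * hPB0_1 +
    ((1 : ℤ) + (1 : ℤ) * r + (1 : ℤ) * k) * (C (l + r - 1) (r - 1)) * hPB1_m1 +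
    ((-1 : ℤ) + (-1 : ℤ) * r + (-1 : ℤ) * k) * (C (l + r - 2) (r - 2)) * hPB1_m1 +
    ((2 : ℤ) * r + (1 : ℤ) * l) * (C (l + r) (r)) * hPB1_0 +
    ((-2 : ℤ) * r + (-1 : ℤ) * l) * (C (l + r - 1) (r - 1)) * hPB1_0 +
    ((-1 : ℤ) + (1 : ℤ) * r + (1 : ℤ) * l + (-1 : ℤ) * k) * (C (l + r) (r + 1)) * hPB1_1 +
    ((-1 : ℤ)) * (C (2 * k - l + 1) (k - l - r)) * hRAm1 +
    ((-1 : ℤ)) * (C (2 * k - l + 1) (k - l - r + 1)) * hRAm1 +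
    ((-2 : ℤ)) * (C (2 * k - l + 1) (k - l - r + 1)) * hRA0 +
    ((1 : ℤ)) * (C (2 * k - l + 1) (k - l - r)) * hRA1 +
    ((-1 : ℤ)) * (C (2 * k - l + 1) (k - l - r + 1)) * hRA1 +
    ((-1 : ℤ)) * (C (2 * k - l) (k - l - r - 1)) * hRA1 +
    ((-1 : ℤ)) * (C (l + r - 1) (r - 1)) * hRBm1 +
    ((1 : ℤ)) * (C (l + r - 2) (r - 2)) * hRBm1 +
    ((-2 : ℤ)) * (C (l + r) (r)) * hRB0 +
    ((2 : ℤ)) * (C (l + r - 1) (r - 1)) * hRB0 +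
    ((-1 : ℤ)) * (C (l + r) (r + 1)) * hRB1
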